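/- Suppose the network has connectivity at least μ̃ with μ̃ > 3/4, and θ is a stable equilibrium. Then |ρ₂| ≥ 1/2, where ρ₂ = (1/n)·∑_j exp(2iθ_j). -/

import Mathlib

open Finset

lemma core_norm (ε u p R : ℝ) (hε0 : 0 ≤ ε) (hε : ε < 1/4) (hu : 0 ≤ u) (hp : 0 ≤ p)
    (hR : R < 1/2) (hnk : p^2 + u*(1-R)/2 ≤ 2*ε*p)
    (hD : 1 + R^2 + 2*p ≤ 2*u + 4*ε) : False := by
  have h1 : (p - ε)^2 + u*(1-R)/2 ≤ ε^2 := by nlinarith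
  have h2 : u*(1-R) ≤ 2*ε^2 := by nlinarith [sq_nonneg (p - ε)]
  have h3 : u ≤ 4*ε^2 := by nlinarith
  have ha : (1+R^2)/2 - ε - u > 0 := by
    nlinarith [mul_pos (by linarith : (0:ℝ) < 1 - 4*ε) (by linarith : (0:ℝ) < 1 + 2*ε), sq_nonneg R]
  have hqa : ε - p ≥ (1+R^2)/2 - ε - u := by linarith
  have hsq : ((1+R^2)/2 - ε - u)^2 ≤ (p - ε)^2 := by nlinarith [ha, hqa]
  nlinarith [sq_nonneg (u - (1+R^2)/2 + ε + (1-R)/4),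
             mul_nonneg (sq_nonneg R) (by linarith : (0:ℝ) ≤ 3 - 4*R),
             mul_pos (by linarith : (0:ℝ) < 1/4 - ε) (by linarith : (0:ℝ) < 1 - R),
             mul_pos (by linarith : (0:ℝ) < 1/4 - ε) (by linarith : (0:ℝ) < 1/4 + ε)]

lemma core_unnorm (ε N Z1 P R2 σ : ℝ) (hN : 0 < N) (hε0 : 0 ≤ ε) (hε : ε < 1/4)
    (hP : 0 ≤ P) (hR2 : R2 < N/2) (hσ : σ = (N - R2)/2)
    (hnk : P^2 + N*Z1^2*σ ≤ 2*ε*N^2*P)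
    (hD : N^2 + R2^2 + 2*P ≤ 2*Z1^2 + 4*ε*N^2) : False := by
  have hN2 : (0:ℝ) < N^2 := by positivity
  have hN4 : (0:ℝ) < N^4 := by positivity
  have key : P^2 + N*Z1^2*((N-R2)/2) ≤ 2*ε*N^2*P := by rw [← hσ]; exact hnk
  apply core_norm ε (Z1^2/N^2) (P/N^2) (R2/N) hε0 hε (by positivity) (by positivity)
  · rw [div_lt_iff₀ hN]; linarith
  · rw [show (P/N^2)^2 + Z1^2/N^2*(1-R2/N)/2 = (P^2 + N*Z1^2*((N-R2)/2))/N^4 by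
        field_simp; try ring,
      show 2*ε*(P/N^2) = (2*ε*N^2*P)/N^4 by field_simp; try ring]
    gcongr
  · rw [show (1:ℝ) + (R2/N)^2 + 2*(P/N^2) = (N^2 + R2^2 + 2*P)/N^2 by field_simp; try ring,
      show 2*(Z1^2/N^2) + 4*ε = (2*Z1^2 + 4*ε*N^2)/N^2 by field_simp; try ring]
    gcongr


set_option maxHeartbeats 2000000 in
/-- If the network has connectivity at least `μ̃ > 3/4` and `θ` is a stable equilibrium, then
`|ρ₂| ≥ 1/2`. -/
theorem stable_equilibrium_abs_rho2_ge_half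
    (n : ℕ) (hn : 1 ≤ n) (A : Fin n → Fin n → ℝ) (θ : Fin n → ℝ) (μ : ℝ)
    (hμ0 : 3 / 4 < μ) (hμ1 : μ ≤ 1)
    (hsym : ∀ j k, A j k = A k j)
    (h01 : ∀ j k, A j k = 0 ∨ A j k = 1)
    (hdiag : ∀ j, A j j = 1)
    (hconn : ∀ j, μ * n ≤ ∑ k : Fin n, A j k)
    (heq : ∀ j, ∑ k : Fin n, A j k * Real.sin (θ k - θ j) = 0)
    (hstab : ∀ v : Fin n → ℝ,
      0 ≤ ∑ j : Fin n, ∑ k : Fin n,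
            A j k * Real.cos (θ k - θ j) * (v j - v k) ^ 2)
    (hsin0 : ∑ j : Fin n, Real.sin (θ j) = 0)
    (hρ₁nonneg : 0 ≤ (1 / (n : ℝ)) * ∑ j : Fin n, Real.cos (θ j))
    (ρ₂ : ℂ) (hρ₂ : ρ₂ = (1 / (n : ℂ)) *
        ∑ j : Fin n, Complex.exp (2 * Complex.I * (θ j : ℂ))) :
    ‖ρ₂‖ ≥ 1 / 2 := by
  classical
  have hNpos : (0:ℝ) < (n:ℝ) := by
    have : (0:ℕ) < n := by omega
    exact_mod_cast this
  set s : Fin n → ℝ := fun j => Real.sin (θ j) with hs_def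
  set c : Fin n → ℝ := fun j => Real.cos (θ j) with hc_def
  set r : Fin n → ℝ := fun j => ∑ k, A j k * Real.cos (θ k - θ j) with hr_def
  set b : Fin n → ℝ := fun j => ∑ k, (1 - A j k) with hb_def
  have hpyth : ∀ j, s j ^ 2 + c j ^ 2 = 1 := fun j => Real.sin_sq_add_cos_sq (θ j)
  have hcos_sub : ∀ j k : Fin n, Real.cos (θ k - θ j) = c k * c j + s k * s j :=
    fun j k => Real.cos_sub _ _
  have hB0 : ∀ j k, (0:ℝ) ≤ 1 - A j k := fun j k => by rcases h01 j k with h | h <;> simp [h]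
  have hBB : ∀ j k, (1 - A j k) * (1 - A j k) = 1 - A j k := fun j k => by
    rcases h01 j k with h | h <;> simp [h]
  have hb_le : ∀ j, b j ≤ (1 - μ) * n := by
    intro j
    have h1 : b j = (n:ℝ) - ∑ k, A j k := by
      rw [hb_def]; simp [Finset.sum_sub_distrib, Finset.card_univ]
    have h2 := hconn j
    have h3 : (1-μ)*(n:ℝ) = n - μ*n := by ring
    rw [h1, h3]; linarith only [h2]
  have hb0 : ∀ j, 0 ≤ b j := fun j => Finset.sum_nonneg (fun k _ => hB0 j k)
  -- equilibrium identities
  have heq2 : ∀ j, (∑ k, A j k * s k) * c j - (∑ k, A j k * c k) * s j = 0 := by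
    intro j
    have h := heq j
    have h2 : ∑ k, A j k * Real.sin (θ k - θ j)
        = (∑ k, A j k * s k) * c j - (∑ k, A j k * c k) * s j := by
      rw [Finset.sum_mul, Finset.sum_mul, ← Finset.sum_sub_distrib]
      refine Finset.sum_congr rfl fun k _ => ?_
      rw [Real.sin_sub]; simp only [hs_def, hc_def]; ring
    linarith only [h2 ▸ h]
  have hr_expand : ∀ j, r j = (∑ k, A j k * c k) * c j + (∑ k, A j k * s k) * s j := by
    intro j
    simp only [hr_def]
    rw [Finset.sum_mul, Finset.sum_mul, ← Finset.sum_add_distrib]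
    refine Finset.sum_congr rfl fun k _ => ?_
    rw [Real.cos_sub]; simp only [hs_def, hc_def]; ring
  have hrs : ∀ j, r j * s j = ∑ k, A j k * s k := by
    intro j
    have h1 := heq2 j; have h2 := hr_expand j; have h3 := hpyth j
    linear_combination (s j) * h2 + (∑ k, A j k * s k) * h3 - (c j) * h1
  have hrc : ∀ j, r j * c j = ∑ k, A j k * c k := by
    intro j
    have h1 := heq2 j; have h2 := hr_expand j; have h3 := hpyth j
    linear_combination (c j) * h2 + (∑ k, A j k * c k) * h3 + (s j) * h1
  -- stability reduced: ∑∑ A cos v_j v_k ≤ ∑ r v²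
  have hswap : ∀ v : Fin n → ℝ,
      ∑ j, ∑ k, A j k * Real.cos (θ k - θ j) * v k ^ 2 = ∑ j, r j * v j ^ 2 := by
    intro v
    rw [Finset.sum_comm]
    refine Finset.sum_congr rfl fun k _ => ?_
    have h1 : ∀ j : Fin n, A j k * Real.cos (θ k - θ j) * v k ^ 2
        = (A k j * Real.cos (θ j - θ k)) * v k ^ 2 := by
      intro j
      rw [hsym j k, ← Real.cos_neg (θ k - θ j), neg_sub]
    simp only [h1]
    rw [← Finset.sum_mul]
  have hstab' : ∀ v : Fin n → ℝ,
      ∑ j, ∑ k, A j k * Real.cos (θ k - θ j) * (v j * v k) ≤ ∑ j, r j * v j ^ 2 := by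
    intro v
    have h0 := hstab v
    have hdiagterm : ∑ j, ∑ k, A j k * Real.cos (θ k - θ j) * v j ^ 2 = ∑ j, r j * v j ^ 2 := by
      refine Finset.sum_congr rfl fun j _ => ?_
      rw [← Finset.sum_mul]
    have hexp : ∑ j, ∑ k, A j k * Real.cos (θ k - θ j) * (v j - v k) ^ 2
        = ∑ j, ∑ k, (A j k * Real.cos (θ k - θ j) * v j ^ 2
            + A j k * Real.cos (θ k - θ j) * v k ^ 2
            - 2 * (A j k * Real.cos (θ k - θ j) * (v j * v k))) := by
      refine Finset.sum_congr rfl fun j _ => Finset.sum_congr rfl fun k _ => ?_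
      ring
    have hsplit : ∑ j, ∑ k, (A j k * Real.cos (θ k - θ j) * v j ^ 2
            + A j k * Real.cos (θ k - θ j) * v k ^ 2
            - 2 * (A j k * Real.cos (θ k - θ j) * (v j * v k)))
        = (∑ j, ∑ k, A j k * Real.cos (θ k - θ j) * v j ^ 2)
          + (∑ j, ∑ k, A j k * Real.cos (θ k - θ j) * v k ^ 2)
          - 2 * (∑ j, ∑ k, A j k * Real.cos (θ k - θ j) * (v j * v k)) := by
      simp only [Finset.sum_sub_distrib, Finset.sum_add_distrib, ← Finset.mul_sum]
    rw [hexp, hsplit, hdiagterm, hswap v] at h0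
    linarith only [h0]
  -- moment abbreviations
  set Z1 : ℝ := ∑ j, c j with hZ1_def
  set sg : ℝ := ∑ j, s j ^ 2 with hsg_def
  set ka : ℝ := ∑ j, c j ^ 2 with hka_def
  set ga : ℝ := ∑ j, c j * s j with hga_def
  -- full-pair factorizations
  have hfull_ss : ∑ j, ∑ k, Real.cos (θ k - θ j) * (s j * s k) = ga^2 + sg^2 := by
    have h4 : ∀ j : Fin n, ∀ k : Fin n, Real.cos (θ k - θ j) * (s j * s k)
        = (c j * s j) * (c k * s k) + (s j^2) * (s k^2) := fun j k => by
      rw [hcos_sub j k]; ring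
    simp only [h4, Finset.sum_add_distrib]
    rw [← Finset.sum_mul_sum univ univ (fun j => c j * s j) (fun k => c k * s k),
        ← Finset.sum_mul_sum univ univ (fun j => s j ^ 2) (fun k => s k ^ 2)]
    rw [hga_def, hsg_def]; ring
  have hfull_cc : ∑ j, ∑ k, Real.cos (θ k - θ j) * (c j * c k) = ka^2 + ga^2 := by
    have h4 : ∀ j : Fin n, ∀ k : Fin n, Real.cos (θ k - θ j) * (c j * c k)
        = (c j ^ 2) * (c k ^ 2) + (c j * s j) * (c k * s k) := fun j k => by
      rw [hcos_sub j k]; ring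
    simp only [h4, Finset.sum_add_distrib]
    rw [← Finset.sum_mul_sum univ univ (fun j => c j ^ 2) (fun k => c k ^ 2),
        ← Finset.sum_mul_sum univ univ (fun j => c j * s j) (fun k => c k * s k)]
    rw [hga_def, hka_def]; ring
  have hfull_s : ∑ j, ∑ k, (s j * s k) = 0 := by
    rw [← Finset.sum_mul_sum univ univ s s, hsin0]; ring
  have hfull_c : ∑ j, ∑ k, (c j * c k) = Z1^2 := by
    rw [← Finset.sum_mul_sum univ univ c c, hZ1_def]; ring
  -- inequality (A)
  have hA : ga^2 + sg^2 ≤ ∑ j, ∑ k, (1 - A j k) * ((Real.cos (θ k - θ j) - 1) * (s j * s k)) := by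
    have h0 := hstab' s
    have h1 : ∑ j, r j * s j ^ 2 = ∑ j, ∑ k, A j k * (s j * s k) := by
      refine Finset.sum_congr rfl fun j _ => ?_
      have h1a : r j * s j ^ 2 = (r j * s j) * s j := by ring
      rw [h1a, hrs j, Finset.sum_mul]
      exact Finset.sum_congr rfl fun k _ => by ring
    have h2 : ∑ j, ∑ k, A j k * (s j * s k)
        = ∑ j, ∑ k, (s j * s k) - ∑ j, ∑ k, (1 - A j k) * (s j * s k) := by
      have hh : ∀ j : Fin n, ∀ k : Fin n,
          A j k * (s j * s k) = s j * s k - (1 - A j k) * (s j * s k) := fun j k => by ring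
      simp only [hh, Finset.sum_sub_distrib]
    have h3 : ∑ j, ∑ k, A j k * Real.cos (θ k - θ j) * (s j * s k)
        = ∑ j, ∑ k, Real.cos (θ k - θ j) * (s j * s k)
          - ∑ j, ∑ k, (1 - A j k) * (Real.cos (θ k - θ j) * (s j * s k)) := by
      have hh : ∀ j : Fin n, ∀ k : Fin n, A j k * Real.cos (θ k - θ j) * (s j * s k)
          = Real.cos (θ k - θ j) * (s j * s k)
            - (1 - A j k) * (Real.cos (θ k - θ j) * (s j * s k)) := fun j k => by ring
      simp only [hh, Finset.sum_sub_distrib]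
    have h5 : ∑ j, ∑ k, (1 - A j k) * ((Real.cos (θ k - θ j) - 1) * (s j * s k))
        = ∑ j, ∑ k, (1 - A j k) * (Real.cos (θ k - θ j) * (s j * s k))
          - ∑ j, ∑ k, (1 - A j k) * (s j * s k) := by
      have hh : ∀ j : Fin n, ∀ k : Fin n,
          (1 - A j k) * ((Real.cos (θ k - θ j) - 1) * (s j * s k))
          = (1 - A j k) * (Real.cos (θ k - θ j) * (s j * s k))
            - (1 - A j k) * (s j * s k) := fun j k => by ring
      simp only [hh, Finset.sum_sub_distrib]
    rw [h3, hfull_ss] at h0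
    rw [h1, h2, hfull_s] at h0
    linarith only [h5, h0]
  -- inequality (B)
  have hB : ga^2 + ka^2 ≤ Z1^2
      + ∑ j, ∑ k, (1 - A j k) * ((Real.cos (θ k - θ j) - 1) * (c j * c k)) := by
    have h0 := hstab' c
    have h1 : ∑ j, r j * c j ^ 2 = ∑ j, ∑ k, A j k * (c j * c k) := by
      refine Finset.sum_congr rfl fun j _ => ?_
      have h1a : r j * c j ^ 2 = (r j * c j) * c j := by ring
      rw [h1a, hrc j, Finset.sum_mul]
      exact Finset.sum_congr rfl fun k _ => by ring
    have h2 : ∑ j, ∑ k, A j k * (c j * c k)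
        = ∑ j, ∑ k, (c j * c k) - ∑ j, ∑ k, (1 - A j k) * (c j * c k) := by
      have hh : ∀ j : Fin n, ∀ k : Fin n,
          A j k * (c j * c k) = c j * c k - (1 - A j k) * (c j * c k) := fun j k => by ring
      simp only [hh, Finset.sum_sub_distrib]
    have h3 : ∑ j, ∑ k, A j k * Real.cos (θ k - θ j) * (c j * c k)
        = ∑ j, ∑ k, Real.cos (θ k - θ j) * (c j * c k)
          - ∑ j, ∑ k, (1 - A j k) * (Real.cos (θ k - θ j) * (c j * c k)) := by
      have hh : ∀ j : Fin n, ∀ k : Fin n, A j k * Real.cos (θ k - θ j) * (c j * c k)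
          = Real.cos (θ k - θ j) * (c j * c k)
            - (1 - A j k) * (Real.cos (θ k - θ j) * (c j * c k)) := fun j k => by ring
      simp only [hh, Finset.sum_sub_distrib]
    have h5 : ∑ j, ∑ k, (1 - A j k) * ((Real.cos (θ k - θ j) - 1) * (c j * c k))
        = ∑ j, ∑ k, (1 - A j k) * (Real.cos (θ k - θ j) * (c j * c k))
          - ∑ j, ∑ k, (1 - A j k) * (c j * c k) := by
      have hh : ∀ j : Fin n, ∀ k : Fin n,
          (1 - A j k) * ((Real.cos (θ k - θ j) - 1) * (c j * c k))
          = (1 - A j k) * (Real.cos (θ k - θ j) * (c j * c k))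
            - (1 - A j k) * (c j * c k) := fun j k => by ring
      simp only [hh, Finset.sum_sub_distrib]
    rw [h3, hfull_cc] at h0
    rw [h1, h2, hfull_c] at h0
    linarith only [h5, h0]
  -- coupling and (D)
  set P : ℝ := ∑ j, ∑ k, (1 - A j k) * (1 + Real.cos (θ k - θ j)) with hP_def
  have hP0 : 0 ≤ P := by
    rw [hP_def]
    refine Finset.sum_nonneg fun j _ => Finset.sum_nonneg fun k _ => ?_
    have := Real.neg_one_le_cos (θ k - θ j)
    exact mul_nonneg (hB0 j k) (by linarith)
  have hEB : ∑ j, b j ≤ (1 - μ) * (n:ℝ) * n := by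
    calc ∑ j, b j ≤ ∑ _j : Fin n, (1 - μ) * (n:ℝ) := Finset.sum_le_sum fun j _ => hb_le j
    _ = (1 - μ) * (n:ℝ) * n := by rw [Finset.sum_const, Finset.card_univ]; simp [mul_comm]
  have hpt : ∀ j k : Fin n, (1 - A j k) * ((Real.cos (θ k - θ j) - 1) * (s j * s k))
      + (1 - A j k) * ((Real.cos (θ k - θ j) - 1) * (c j * c k))
      ≤ (1 - A j k) * (2 - (1 + Real.cos (θ k - θ j))) := by
    intro j k
    have h1 : (s j * s k) + (c j * c k) = Real.cos (θ k - θ j) := by rw [hcos_sub j k]; ring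
    have key : 0 ≤ (1 - A j k) * ((1 - Real.cos (θ k - θ j)) * (1 + Real.cos (θ k - θ j))) :=
      mul_nonneg (hB0 j k) (mul_nonneg
        (by nlinarith [Real.cos_le_one (θ k - θ j)])
        (by nlinarith [Real.neg_one_le_cos (θ k - θ j)]))
    have h2 : (1 - A j k) * ((Real.cos (θ k - θ j) - 1) * ((s j * s k) + (c j * c k)))
        = (1 - A j k) * ((Real.cos (θ k - θ j) - 1) * Real.cos (θ k - θ j)) := by rw [h1]
    nlinarith only [key, h2]
  have hcpl : (∑ j, ∑ k, (1 - A j k) * ((Real.cos (θ k - θ j) - 1) * (s j * s k)))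
      + (∑ j, ∑ k, (1 - A j k) * ((Real.cos (θ k - θ j) - 1) * (c j * c k)))
      ≤ 2 * (∑ j, b j) - P := by
    have hs1 : (∑ j, ∑ k, (1 - A j k) * ((Real.cos (θ k - θ j) - 1) * (s j * s k)))
        + (∑ j, ∑ k, (1 - A j k) * ((Real.cos (θ k - θ j) - 1) * (c j * c k)))
        = ∑ j, ∑ k, ((1 - A j k) * ((Real.cos (θ k - θ j) - 1) * (s j * s k))
            + (1 - A j k) * ((Real.cos (θ k - θ j) - 1) * (c j * c k))) := by
      rw [← Finset.sum_add_distrib]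
      exact Finset.sum_congr rfl fun j _ => (Finset.sum_add_distrib).symm
    have hs2 : 2 * (∑ j, b j) - P = ∑ j, ∑ k, (1 - A j k) * (2 - (1 + Real.cos (θ k - θ j))) := by
      rw [hP_def, Finset.mul_sum, ← Finset.sum_sub_distrib]
      refine Finset.sum_congr rfl fun j _ => ?_
      simp only [hb_def]
      rw [Finset.mul_sum, ← Finset.sum_sub_distrib]
      exact Finset.sum_congr rfl fun k _ => by ring
    rw [hs1, hs2]
    exact Finset.sum_le_sum fun j _ => Finset.sum_le_sum fun k _ => hpt j k
  set R2 : ℝ := ∑ j, Real.cos (2 * θ j) with hR2_def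
  set I2 : ℝ := ∑ j, Real.sin (2 * θ j) with hI2_def
  have e1 : ka + sg = (n:ℝ) := by
    have hh : ∀ j : Fin n, c j ^ 2 + s j ^ 2 = 1 := fun j => by linear_combination hpyth j
    calc ka + sg = ∑ j, (c j ^ 2 + s j ^ 2) := by
            rw [Finset.sum_add_distrib, hka_def, hsg_def]
      _ = ∑ _j : Fin n, (1:ℝ) := Finset.sum_congr rfl fun j _ => hh j
      _ = (n:ℝ) := by rw [Finset.sum_const, Finset.card_univ]; simp
  have e2 : ka - sg = R2 := by
    rw [hka_def, hsg_def, hR2_def, ← Finset.sum_sub_distrib]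
    refine Finset.sum_congr rfl fun j _ => ?_
    simp only [hs_def, hc_def]
    exact (Real.cos_two_mul' (θ j)).symm
  have e3 : 2 * ga = I2 := by
    rw [hga_def, hI2_def, Finset.mul_sum]
    refine Finset.sum_congr rfl fun j _ => ?_
    simp only [hs_def, hc_def]
    rw [Real.sin_two_mul]; ring
  have e4 : (n:ℝ)^2 + R2^2 + I2^2 = 2*ka^2 + 2*sg^2 + 4*ga^2 := by
    rw [← e1, ← e2, ← e3]; ring
  have hD : (n:ℝ)^2 + R2^2 + I2^2 + 2*P ≤ 2*Z1^2 + 4*((1-μ) * (n:ℝ) * n) := by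
    linarith only [hA, hB, hcpl, hEB, e4]
  -- eta step
  have hs0 : ∑ k : Fin n, s k = 0 := hsin0
  have hBs : ∀ j, ∑ k, (1 - A j k) * s k = - (r j * s j) := by
    intro j
    have h1 : ∑ k, (1 - A j k) * s k = (∑ k, s k) - ∑ k, A j k * s k := by
      have hh : ∀ k : Fin n, (1 - A j k) * s k = s k - A j k * s k := fun k => by ring
      simp only [hh, Finset.sum_sub_distrib]
    rw [h1, hs0, hrs j]; ring
  have hBc : ∀ j, ∑ k, (1 - A j k) * c k = Z1 - r j * c j := by
    intro j
    have h1 : ∑ k, (1 - A j k) * c k = (∑ k, c k) - ∑ k, A j k * c k := by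
      have hh : ∀ k : Fin n, (1 - A j k) * c k = c k - A j k * c k := fun k => by ring
      simp only [hh, Finset.sum_sub_distrib]
    rw [h1, hrc j, hZ1_def]
  have hetac : ∀ j, ∑ k, (1 - A j k) * (c k + c j) = Z1 + (b j - r j) * c j := by
    intro j
    have h1 : ∑ k, (1 - A j k) * (c k + c j)
        = (∑ k, (1 - A j k) * c k) + (∑ k, (1 - A j k)) * c j := by
      rw [Finset.sum_mul, ← Finset.sum_add_distrib]
      exact Finset.sum_congr rfl fun k _ => by ring
    rw [h1, hBc j]
    simp only [hb_def]
    ring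
  have hetas : ∀ j, ∑ k, (1 - A j k) * (s k + s j) = (b j - r j) * s j := by
    intro j
    have h1 : ∑ k, (1 - A j k) * (s k + s j)
        = (∑ k, (1 - A j k) * s k) + (∑ k, (1 - A j k)) * s j := by
      rw [Finset.sum_mul, ← Finset.sum_add_distrib]
      exact Finset.sum_congr rfl fun k _ => by ring
    rw [h1, hBs j]
    simp only [hb_def]
    ring
  -- row Cauchy-Schwarz
  have csgen : ∀ j, ∀ x : Fin n → ℝ,
      (∑ k, (1 - A j k) * x k)^2 ≤ b j * (∑ k, (1 - A j k) * (x k)^2) := by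
    intro j x
    have h := Finset.sum_mul_sq_le_sq_mul_sq univ (fun k => 1 - A j k)
      (fun k => (1 - A j k) * x k)
    have e1 : ∑ k, (1 - A j k) * ((1 - A j k) * x k) = ∑ k, (1 - A j k) * x k :=
      Finset.sum_congr rfl fun k _ => by rw [← mul_assoc, hBB j k]
    have e2 : ∑ k, (1 - A j k)^2 = b j := by
      simp only [hb_def]
      exact Finset.sum_congr rfl fun k _ => by rw [sq, hBB j k]
    have e3 : ∑ k, ((1 - A j k) * x k)^2 = ∑ k, (1 - A j k) * (x k)^2 := by
      refine Finset.sum_congr rfl fun k _ => ?_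
      rw [mul_pow, show (1 - A j k)^2 = 1 - A j k from by rw [sq, hBB j k]]
    rw [e1, e2, e3] at h
    exact h
  have hrow2 : ∀ j, (Z1 * c j + (b j - r j))^2 + Z1^2 * s j ^ 2
      ≤ 2 * ((1-μ)*(n:ℝ)) * (∑ k, (1 - A j k) * (1 + Real.cos (θ k - θ j))) := by
    intro j
    have h1 := csgen j (fun k => c k + c j)
    have h2 := csgen j (fun k => s k + s j)
    rw [hetac j] at h1
    rw [hetas j] at h2
    have hsum2 : (∑ k, (1 - A j k) * (c k + c j)^2) + (∑ k, (1 - A j k) * (s k + s j)^2)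
        = 2 * ∑ k, (1 - A j k) * (1 + Real.cos (θ k - θ j)) := by
      rw [Finset.mul_sum, ← Finset.sum_add_distrib]
      refine Finset.sum_congr rfl fun k _ => ?_
      have hx := hcos_sub j k
      have hpj := hpyth j
      have hpk := hpyth k
      linear_combination (-(2*(1 - A j k))) * hx + (1 - A j k) * hpj + (1 - A j k) * hpk
    have hid : (Z1 + (b j - r j) * c j)^2 + ((b j - r j) * s j)^2
        = (Z1 * c j + (b j - r j))^2 + Z1^2 * s j^2 := by
      linear_combination ((b j - r j)^2 - Z1^2) * hpyth j
    have hPj0 : 0 ≤ ∑ k, (1 - A j k) * (1 + Real.cos (θ k - θ j)) := by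
      refine Finset.sum_nonneg fun k _ => mul_nonneg (hB0 j k) ?_
      have := Real.neg_one_le_cos (θ k - θ j); linarith
    have hb2 : b j * (2 * ∑ k, (1 - A j k) * (1 + Real.cos (θ k - θ j)))
        ≤ ((1-μ)*(n:ℝ)) * (2 * ∑ k, (1 - A j k) * (1 + Real.cos (θ k - θ j))) :=
      mul_le_mul_of_nonneg_right (hb_le j) (by linarith)
    have hchain : (Z1 + (b j - r j) * c j)^2 + ((b j - r j) * s j)^2
        ≤ b j * (2 * ∑ k, (1 - A j k) * (1 + Real.cos (θ k - θ j))) := by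
      calc (Z1 + (b j - r j) * c j)^2 + ((b j - r j) * s j)^2
          ≤ b j * (∑ k, (1 - A j k) * (c k + c j)^2)
            + b j * (∑ k, (1 - A j k) * (s k + s j)^2) := by linarith only [h1, h2]
        _ = b j * ((∑ k, (1 - A j k) * (c k + c j)^2) + (∑ k, (1 - A j k) * (s k + s j)^2)) := by ring
        _ = b j * (2 * ∑ k, (1 - A j k) * (1 + Real.cos (θ k - θ j))) := by rw [hsum2]
    calc (Z1 * c j + (b j - r j))^2 + Z1^2 * s j^2
        = (Z1 + (b j - r j) * c j)^2 + ((b j - r j) * s j)^2 := hid.symm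
      _ ≤ b j * (2 * ∑ k, (1 - A j k) * (1 + Real.cos (θ k - θ j))) := hchain
      _ ≤ ((1-μ)*(n:ℝ)) * (2 * ∑ k, (1 - A j k) * (1 + Real.cos (θ k - θ j))) := hb2
      _ = 2 * ((1-μ)*(n:ℝ)) * (∑ k, (1 - A j k) * (1 + Real.cos (θ k - θ j))) := by ring
  have hsumrow : (∑ j, (Z1 * c j + (b j - r j))^2) + Z1^2 * sg
      ≤ 2 * ((1-μ)*(n:ℝ)) * P := by
    have h1 : ∑ j, ((Z1 * c j + (b j - r j))^2 + Z1^2 * s j ^ 2)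
        ≤ ∑ j, 2 * ((1-μ)*(n:ℝ)) * (∑ k, (1 - A j k) * (1 + Real.cos (θ k - θ j))) :=
      Finset.sum_le_sum fun j _ => hrow2 j
    rw [Finset.sum_add_distrib, ← Finset.mul_sum, ← Finset.mul_sum] at h1
    rw [hP_def]
    calc (∑ j, (Z1 * c j + (b j - r j))^2) + Z1^2 * sg
        = (∑ j, (Z1 * c j + (b j - r j))^2) + Z1^2 * (∑ j, s j ^ 2) := by rw [hsg_def]
      _ ≤ 2 * ((1-μ)*(n:ℝ)) * ∑ j, ∑ k, (1 - A j k) * (1 + Real.cos (θ k - θ j)) := h1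
  -- linear sum identity
  have hfullcos : ∑ j, ∑ k, Real.cos (θ k - θ j) = Z1^2 := by
    have hh : ∀ j : Fin n, ∀ k : Fin n, Real.cos (θ k - θ j)
        = (c j) * (c k) + (s j) * (s k) := fun j k => by rw [hcos_sub j k]; ring
    simp only [hh, Finset.sum_add_distrib]
    rw [← Finset.sum_mul_sum univ univ c c, ← Finset.sum_mul_sum univ univ s s, hs0, hZ1_def]
    ring
  have hr_sum : ∑ j, r j = Z1^2 - ∑ j, ∑ k, (1 - A j k) * Real.cos (θ k - θ j) := by
    have h1 : ∀ j : Fin n, r j = (∑ k, Real.cos (θ k - θ j))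
        - ∑ k, (1 - A j k) * Real.cos (θ k - θ j) := by
      intro j
      simp only [hr_def]
      have hh : ∀ k : Fin n, A j k * Real.cos (θ k - θ j)
          = Real.cos (θ k - θ j) - (1 - A j k) * Real.cos (θ k - θ j) := fun k => by ring
      simp only [hh, Finset.sum_sub_distrib]
    simp only [h1, Finset.sum_sub_distrib]
    rw [hfullcos]
  have hPsplit : P = (∑ j, b j) + ∑ j, ∑ k, (1 - A j k) * Real.cos (θ k - θ j) := by
    rw [hP_def]
    have hh : ∀ j : Fin n, ∀ k : Fin n, (1 - A j k) * (1 + Real.cos (θ k - θ j))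
        = (1 - A j k) + (1 - A j k) * Real.cos (θ k - θ j) := fun j k => by ring
    simp only [hh, Finset.sum_add_distrib]
    rfl
  have hsumlin : ∑ j, (Z1 * c j + (b j - r j)) = P := by
    have h1 : ∑ j, (Z1 * c j + (b j - r j))
        = Z1 * (∑ j, c j) + ((∑ j, b j) - ∑ j, r j) := by
      rw [Finset.mul_sum, ← Finset.sum_sub_distrib, ← Finset.sum_add_distrib]
    rw [h1, ← hZ1_def, hr_sum, hPsplit]
    ring
  -- final Cauchy-Schwarz
  have hfinCS : P^2 ≤ (n:ℝ) * ∑ j, (Z1 * c j + (b j - r j))^2 := by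
    rw [← hsumlin]
    have h := Finset.sum_mul_sq_le_sq_mul_sq univ (fun _ : Fin n => (1:ℝ))
      (fun j => Z1 * c j + (b j - r j))
    have e1 : ∑ j : Fin n, (1:ℝ) * (Z1 * c j + (b j - r j)) = ∑ j, (Z1 * c j + (b j - r j)) :=
      Finset.sum_congr rfl fun j _ => by ring
    have e2 : ∑ _j : Fin n, ((1:ℝ))^2 = (n:ℝ) := by
      rw [Finset.sum_const, Finset.card_univ]; simp
    rw [e1, e2] at h
    exact h
  have hNK : P^2 + (n:ℝ) * Z1^2 * sg ≤ 2*(1-μ)*(n:ℝ)^2*P := by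
    have hn0 : (0:ℝ) ≤ (n:ℝ) := le_of_lt hNpos
    have h2 : (n:ℝ) * ((∑ j, (Z1 * c j + (b j - r j))^2) + Z1^2 * sg)
        ≤ (n:ℝ) * (2 * ((1-μ)*(n:ℝ)) * P) := mul_le_mul_of_nonneg_left hsumrow hn0
    linarith only [hfinCS, h2]
  -- endgame
  have hmain : ((n:ℝ)/2)^2 ≤ R2^2 + I2^2 := by
    by_contra hcon
    push_neg at hcon
    have hR2lt : R2 < (n:ℝ)/2 := by
      by_contra hge
      push_neg at hge
      have hsq : ((n:ℝ)/2)^2 ≤ R2^2 := by nlinarith only [hge, hNpos]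
      linarith only [hsq, hcon, sq_nonneg I2]
    have hsg_id : sg = ((n:ℝ) - R2)/2 := by linarith only [e1, e2]
    have hD' : (n:ℝ)^2 + R2^2 + 2*P ≤ 2*Z1^2 + 4*(1-μ)*(n:ℝ)^2 := by
      have hr : 4*((1-μ) * (n:ℝ) * n) = 4*(1-μ)*(n:ℝ)^2 := by ring
      linarith only [hD, sq_nonneg I2, hr]
    have hNK' : P^2 + (n:ℝ)*Z1^2*sg ≤ 2*(1-μ)*(n:ℝ)^2*P := hNK
    exact core_unnorm (1-μ) (n:ℝ) Z1 P R2 sg hNpos (by linarith) (by linarith)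
      hP0 hR2lt hsg_id hNK' hD'
  -- convert to the complex statement
  rw [hρ₂]
  have hterm : ∀ j : Fin n, Complex.exp (2 * Complex.I * (θ j:ℂ))
      = (Real.cos (2 * θ j) : ℂ) + (Real.sin (2 * θ j) : ℂ) * Complex.I := by
    intro j
    have h1 : 2 * Complex.I * (θ j:ℂ) = ((2 * θ j : ℝ) : ℂ) * Complex.I := by push_cast; ring
    rw [h1, Complex.exp_mul_I, Complex.ofReal_cos, Complex.ofReal_sin]
  have hsumexp : ∑ j : Fin n, Complex.exp (2 * Complex.I * (θ j : ℂ))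
      = (R2 : ℂ) + (I2 : ℂ) * Complex.I := by
    simp only [hterm]
    rw [Finset.sum_add_distrib, ← Finset.sum_mul, hR2_def, hI2_def]
    push_cast
    ring
  rw [hsumexp, norm_mul]
  have habs1 : ‖1/(n:ℂ)‖ = 1/(n:ℝ) := by
    rw [norm_div, norm_one, Complex.norm_natCast]
  rw [habs1, Complex.norm_add_mul_I]
  have hsqrt : (n:ℝ)/2 ≤ Real.sqrt (R2^2 + I2^2) := by
    have h1 : (n:ℝ)/2 = Real.sqrt (((n:ℝ)/2)^2) := (Real.sqrt_sq (by positivity)).symm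
    rw [h1]
    exact Real.sqrt_le_sqrt hmain
  have hfin : 1/(n:ℝ) * ((n:ℝ)/2) ≤ 1/(n:ℝ) * Real.sqrt (R2^2+I2^2) :=
    mul_le_mul_of_nonneg_left hsqrt (by positivity)
  have heqf : 1/(n:ℝ) * ((n:ℝ)/2) = 1/2 := by field_simp
  rw [ge_iff_le, ← heqf]
  exact hfin
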